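/- Let (ωᵢ, vᵢ) ∈ ℝ³×ℝ³, i = 1,2,3, be three twists such that ω₁ and ω₂ are linearly independent. Then there exist a real 3×3 matrix R with R·Rᵀ = I and det R = 1, and a real 3×3 skew-symmetric matrix T, such that the transformed twists (ωᵢ', vᵢ') = (Rωᵢ, TRωᵢ + Rvᵢ) satisfy: the second and third coordinates of ω₁' are zero, the third coordinate of ω₂' is zero, the second and third coordinates of v₁' are zero, and the third coordinate of v₂' is zero. -/

import Mathlib

open Matrix

set_option maxHeartbeats 1600000

/-- Normal form for three twists: if `ω₁, ω₂` are linearly independent, there is a Euclidean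
transformation `(R, T)` (with `R ∈ SO(3)` and `T` skew-symmetric) taking the twists
`(ωᵢ, vᵢ) ↦ (Rωᵢ, TRωᵢ + Rvᵢ)` to a form where `ω₁'` lies along the first axis, `ω₂'` lies
in the plane of the first two axes, `v₁'` lies along the first axis and `v₂'` lies in the
plane of the first two axes. -/
theorem normal_form_three_twists
    (ω₁ ω₂ ω₃ v₁ v₂ v₃ : Fin 3 → ℝ)
    (hindep : LinearIndependent ℝ ![ω₁, ω₂]) :
    ∃ R T : Matrix (Fin 3) (Fin 3) ℝ,
      R * Rᵀ = 1 ∧ R.det = 1 ∧ Tᵀ = -T ∧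
      (R.mulVec ω₁) 1 = 0 ∧ (R.mulVec ω₁) 2 = 0 ∧
      (R.mulVec ω₂) 2 = 0 ∧
      (T.mulVec (R.mulVec ω₁) + R.mulVec v₁) 1 = 0 ∧
      (T.mulVec (R.mulVec ω₁) + R.mulVec v₁) 2 = 0 ∧
      (T.mulVec (R.mulVec ω₂) + R.mulVec v₂) 2 = 0 := by
  have hω1 : ω₁ ≠ 0 := by simpa using hindep.ne_zero 0
  obtain ⟨d1, hd1def⟩ : ∃ d : ℝ, d = ω₁ 0 ^ 2 + ω₁ 1 ^ 2 + ω₁ 2 ^ 2 := ⟨_, rfl⟩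
  have hne : ω₁ 0 ≠ 0 ∨ ω₁ 1 ≠ 0 ∨ ω₁ 2 ≠ 0 := by
    by_contra h
    push_neg at h
    exact hω1 (funext fun i => by fin_cases i <;> simp [h.1, h.2.1, h.2.2])
  have hd1 : 0 < d1 := by
    rw [hd1def]
    rcases hne with h | h | h <;>
      nlinarith [sq_nonneg (ω₁ 0), sq_nonneg (ω₁ 1), sq_nonneg (ω₁ 2),
        pow_pos (abs_pos.2 h) 2, sq_abs (ω₁ 0), sq_abs (ω₁ 1), sq_abs (ω₁ 2)]
  obtain ⟨n1, hn1def⟩ : ∃ n : ℝ, n = Real.sqrt d1 := ⟨_, rfl⟩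
  have hn1 : 0 < n1 := hn1def ▸ Real.sqrt_pos.2 hd1
  have hn1sq : n1 ^ 2 = d1 := by rw [hn1def]; exact Real.sq_sqrt hd1.le
  have hn1ne : n1 ≠ 0 := ne_of_gt hn1
  obtain ⟨k, hkdef⟩ : ∃ c : ℝ, c = (ω₂ 0 * ω₁ 0 + ω₂ 1 * ω₁ 1 + ω₂ 2 * ω₁ 2) / d1 := ⟨_, rfl⟩
  obtain ⟨u, hu⟩ : ∃ u : Fin 3 → ℝ, ∀ i, u i = ω₂ i - k * ω₁ i := ⟨_, fun _ => rfl⟩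
  have hkd : k * d1 = ω₂ 0 * ω₁ 0 + ω₂ 1 * ω₁ 1 + ω₂ 2 * ω₁ 2 := by
    rw [hkdef]; field_simp
  have huω1 : u 0 * ω₁ 0 + u 1 * ω₁ 1 + u 2 * ω₁ 2 = 0 := by
    rw [hu 0, hu 1, hu 2]
    linear_combination (-1 : ℝ) * hkd + k * hd1def
  have hune : u 0 ≠ 0 ∨ u 1 ≠ 0 ∨ u 2 ≠ 0 := by
    by_contra h
    push_neg at h
    have hω2 : ω₂ = k • ω₁ := by
      funext i
      have h0 : u i = 0 := by fin_cases i <;> [exact h.1; exact h.2.1; exact h.2.2]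
      rw [hu i, sub_eq_zero] at h0
      simpa using h0
    have := Fintype.linearIndependent_iff.1 hindep ![k, -1] (by
      simp [Fin.sum_univ_two, hω2]) 1
    simp at this
  obtain ⟨d2, hd2def⟩ : ∃ d : ℝ, d = u 0 ^ 2 + u 1 ^ 2 + u 2 ^ 2 := ⟨_, rfl⟩
  have hd2 : 0 < d2 := by
    rw [hd2def]
    rcases hune with h | h | h <;>
      nlinarith [sq_nonneg (u 0), sq_nonneg (u 1), sq_nonneg (u 2),
        pow_pos (abs_pos.2 h) 2, sq_abs (u 0), sq_abs (u 1), sq_abs (u 2)]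
  obtain ⟨n2, hn2def⟩ : ∃ n : ℝ, n = Real.sqrt d2 := ⟨_, rfl⟩
  have hn2 : 0 < n2 := hn2def ▸ Real.sqrt_pos.2 hd2
  have hn2sq : n2 ^ 2 = d2 := by rw [hn2def]; exact Real.sq_sqrt hd2.le
  have hn2ne : n2 ≠ 0 := ne_of_gt hn2
  -- orthonormal rows
  obtain ⟨e1, he1⟩ : ∃ e : Fin 3 → ℝ, ∀ i, e i = ω₁ i / n1 := ⟨_, fun _ => rfl⟩
  obtain ⟨e2, he2⟩ : ∃ e : Fin 3 → ℝ, ∀ i, e i = u i / n2 := ⟨_, fun _ => rfl⟩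
  obtain ⟨e3, he30, he31, he32⟩ : ∃ e : Fin 3 → ℝ,
      e 0 = e1 1 * e2 2 - e1 2 * e2 1 ∧ e 1 = e1 2 * e2 0 - e1 0 * e2 2 ∧
      e 2 = e1 0 * e2 1 - e1 1 * e2 0 :=
    ⟨![e1 1 * e2 2 - e1 2 * e2 1, e1 2 * e2 0 - e1 0 * e2 2, e1 0 * e2 1 - e1 1 * e2 0],
      rfl, rfl, rfl⟩
  have h11 : e1 0 * e1 0 + e1 1 * e1 1 + e1 2 * e1 2 = 1 := by
    rw [he1 0, he1 1, he1 2]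
    field_simp
    linear_combination -hn1sq - hd1def
  have h22 : e2 0 * e2 0 + e2 1 * e2 1 + e2 2 * e2 2 = 1 := by
    rw [he2 0, he2 1, he2 2]
    field_simp
    linear_combination -hn2sq - hd2def
  have h12 : e1 0 * e2 0 + e1 1 * e2 1 + e1 2 * e2 2 = 0 := by
    rw [he1 0, he1 1, he1 2, he2 0, he2 1, he2 2]
    field_simp
    linear_combination huω1
  have h13 : e1 0 * e3 0 + e1 1 * e3 1 + e1 2 * e3 2 = 0 := by
    rw [he30, he31, he32]; ring
  have h23 : e2 0 * e3 0 + e2 1 * e3 1 + e2 2 * e3 2 = 0 := by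
    rw [he30, he31, he32]; ring
  have h33 : e3 0 * e3 0 + e3 1 * e3 1 + e3 2 * e3 2 = 1 := by
    have lag : e3 0 * e3 0 + e3 1 * e3 1 + e3 2 * e3 2 =
        (e1 0 * e1 0 + e1 1 * e1 1 + e1 2 * e1 2) *
          (e2 0 * e2 0 + e2 1 * e2 1 + e2 2 * e2 2) -
        (e1 0 * e2 0 + e1 1 * e2 1 + e1 2 * e2 2) ^ 2 := by
      rw [he30, he31, he32]; ring
    rw [lag, h11, h22, h12]; norm_num
  obtain ⟨R, hR⟩ : ∃ R : Matrix (Fin 3) (Fin 3) ℝ,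
      ∀ j, R 0 j = e1 j ∧ R 1 j = e2 j ∧ R 2 j = e3 j :=
    ⟨Matrix.of ![e1, e2, e3], fun j => ⟨rfl, rfl, rfl⟩⟩
  have hωe1 : ∀ i, ω₁ i = n1 * e1 i := fun i => by rw [he1 i]; field_simp
  have hue2 : ∀ i, u i = n2 * e2 i := fun i => by rw [he2 i]; field_simp
  have hωe2 : ∀ i, ω₂ i = n2 * e2 i + k * (n1 * e1 i) := fun i => by
    rw [← hue2 i, ← hωe1 i, hu i]; ring
  have hw10 : (R.mulVec ω₁) 0 = n1 := by
    simp only [mulVec, dotProduct, Fin.sum_univ_three, (hR _).1, hωe1]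
    linear_combination n1 * h11
  have hw11 : (R.mulVec ω₁) 1 = 0 := by
    simp only [mulVec, dotProduct, Fin.sum_univ_three, (hR _).2.1, hωe1]
    linear_combination n1 * h12
  have hw12 : (R.mulVec ω₁) 2 = 0 := by
    simp only [mulVec, dotProduct, Fin.sum_univ_three, (hR _).2.2, hωe1]
    linear_combination n1 * h13
  have hw21 : (R.mulVec ω₂) 1 = n2 := by
    simp only [mulVec, dotProduct, Fin.sum_univ_three, (hR _).2.1, hωe2]
    linear_combination n2 * h22 + n1 * k * h12
  have hw22 : (R.mulVec ω₂) 2 = 0 := by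
    simp only [mulVec, dotProduct, Fin.sum_univ_three, (hR _).2.2, hωe2]
    linear_combination n2 * h23 + n1 * k * h13
  -- the skew-symmetric part
  obtain ⟨p1, hp1⟩ : ∃ p, p = R.mulVec v₁ := ⟨_, rfl⟩
  obtain ⟨p2, hp2⟩ : ∃ p, p = R.mulVec v₂ := ⟨_, rfl⟩
  obtain ⟨t3, ht3⟩ : ∃ t : ℝ, t = -(p1 1) / n1 := ⟨_, rfl⟩
  obtain ⟨t2, ht2⟩ : ∃ t : ℝ, t = p1 2 / n1 := ⟨_, rfl⟩
  obtain ⟨t1, ht1⟩ : ∃ t : ℝ, t = (t2 * ((R.mulVec ω₂) 0) - p2 2) / n2 := ⟨_, rfl⟩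
  obtain ⟨T, hT⟩ : ∃ T : Matrix (Fin 3) (Fin 3) ℝ,
      T 0 0 = 0 ∧ T 0 1 = -t3 ∧ T 0 2 = t2 ∧
      T 1 0 = t3 ∧ T 1 1 = 0 ∧ T 1 2 = -t1 ∧
      T 2 0 = -t2 ∧ T 2 1 = t1 ∧ T 2 2 = 0 :=
    ⟨Matrix.of ![![0, -t3, t2], ![t3, 0, -t1], ![-t2, t1, 0]],
      rfl, rfl, rfl, rfl, rfl, rfl, rfl, rfl, rfl⟩
  obtain ⟨hT00, hT01, hT02, hT10, hT11, hT12, hT20, hT21, hT22⟩ := hT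
  have hTm : ∀ (w : Fin 3 → ℝ) (i : Fin 3),
      T.mulVec w i = T i 0 * w 0 + T i 1 * w 1 + T i 2 * w 2 := by
    intro w i
    simp [mulVec, dotProduct, Fin.sum_univ_three]
  refine ⟨R, T, ?_, ?_, ?_, hw11, hw12, hw22, ?_, ?_, ?_⟩
  · ext i j
    rw [Matrix.mul_apply, Fin.sum_univ_three]
    fin_cases i <;> fin_cases j <;>
      simp only [transpose_apply, Matrix.one_apply, Fin.isValue, (hR _).1, (hR _).2.1,
        (hR _).2.2, if_true, Fin.zero_eta, Fin.mk_one, Fin.reduceFinMk, Fin.reduceEq] <;>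
      norm_num <;> linarith [h11, h22, h33, h12, h13, h23]
  · rw [Matrix.det_fin_three]
    simp only [(hR _).1, (hR _).2.1, (hR _).2.2]
    have hdet : e1 0 * (e2 1 * e3 2 - e2 2 * e3 1) - e1 1 * (e2 0 * e3 2 - e2 2 * e3 0) +
        e1 2 * (e2 0 * e3 1 - e2 1 * e3 0) =
        e3 0 * e3 0 + e3 1 * e3 1 + e3 2 * e3 2 := by
      rw [he30, he31, he32]; ring
    linarith [h33, hdet]
  · ext i j
    rw [transpose_apply, Matrix.neg_apply]
    fin_cases i <;> fin_cases j <;>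
      simp only [Fin.isValue, Fin.zero_eta, Fin.mk_one, Fin.reduceFinMk, hT00, hT01,
        hT02, hT10, hT11, hT12, hT20, hT21, hT22, neg_neg, neg_zero]
  · rw [Pi.add_apply, hTm, hw10, hw11, hw12, hT10, hT11, hT12, ← hp1, ht3]
    field_simp
    ring
  · rw [Pi.add_apply, hTm, hw10, hw11, hw12, hT20, hT21, hT22, ← hp1, ht2]
    field_simp
    ring
  · rw [Pi.add_apply, hTm, hw21, hw22, hT20, hT21, hT22, ← hp2, ht1, ht2]
    field_simp
    ring
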